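/- Let E and F be GTESs over a signature Σ, and suppose that R⟨E∪F,∅⟩ reaches a constant a ∈ C⟨E∪F,∅⟩ from a proper extension of a constant b ∈ C⟨E∪F,∅⟩. Then there exist an integer k with 1 ≤ k ≤ |C⟨E∪F,∅⟩| and, for each j = 1,…,k, a rule σ_j(a_{j1},…,a_{j m_j}) → a_j of R⟨E∪F,∅⟩ with m_j ≥ 1 and an index i_j ∈ {1,…,m_j}, such that: b = a_{1 i_1}; a_j = a_{(j+1) i_{j+1}} for each j = 1,…,k−1; b ∉ {a_1,…,a_{k−1}}; a_i ≠ a_j for all 1 ≤ i < j ≤ k−1; and a = a_k. -/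

import Mathlib

inductive GTerm (S : Type) (ar : S → ℕ) : Type
  | node (σ : S) (args : Fin (ar σ) → GTerm S ar) : GTerm S ar

/-- The congruence on the ground term algebra generated by a set of equations `E`:
the smallest equivalence relation containing `E` and compatible with all operations. -/
inductive EqCong {S : Type} {ar : S → ℕ} (E : Set (GTerm S ar × GTerm S ar)) :
    GTerm S ar → GTerm S ar → Prop
  | base {s t : GTerm S ar} : (s, t) ∈ E → EqCong E s t
  | refl (t : GTerm S ar) : EqCong E t t
  | symm {s t : GTerm S ar} : EqCong E s t → EqCong E t s
  | trans {s t u : GTerm S ar} : EqCong E s t → EqCong E t u → EqCong E s u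
  | lift {σ : S} {f g : Fin (ar σ) → GTerm S ar} :
      (∀ i, EqCong E (f i) (g i)) → EqCong E (GTerm.node σ f) (GTerm.node σ g)

/-- A congruence on the ground term algebra: an equivalence relation compatible
with all operations. -/
def IsTermCongruence {S : Type} {ar : S → ℕ} (r : GTerm S ar → GTerm S ar → Prop) : Prop :=
  Equivalence r ∧
    ∀ (σ : S) (f g : Fin (ar σ) → GTerm S ar),
      (∀ i, r (f i) (g i)) → r (GTerm.node σ f) (GTerm.node σ g)

/-- `Subterm s t` : `s` is a subterm of `t`. -/
inductive Subterm {S : Type} {ar : S → ℕ} : GTerm S ar → GTerm S ar → Prop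
  | refl (t : GTerm S ar) : Subterm t t
  | node {s : GTerm S ar} {σ : S} {f : Fin (ar σ) → GTerm S ar} (i : Fin (ar σ)) :
      Subterm s (f i) → Subterm s (GTerm.node σ f)

/-- `ST E` : the set of all subterms of sides of equations of `E`. -/
def STSet {S : Type} {ar : S → ℕ} (E : Set (GTerm S ar × GTerm S ar)) : Set (GTerm S ar) :=
  {t | ∃ p ∈ E, Subterm t p.1 ∨ Subterm t p.2}

/-- The `Θ⟨G⟩`-class of `t` inside `W`. -/
def thCls {S : Type} {ar : S → ℕ} (G : Set (GTerm S ar × GTerm S ar))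
    (W : Set (GTerm S ar)) (t : GTerm S ar) : Set (GTerm S ar) :=
  {u | u ∈ W ∧ EqCong G t u}

/-- `Θ⟨G⟩` as a set of pairs: the restriction of the generated congruence to `W × W`. -/
def Theta {S : Type} {ar : S → ℕ} (G : Set (GTerm S ar × GTerm S ar))
    (W : Set (GTerm S ar)) : Set (GTerm S ar × GTerm S ar) :=
  {p | p.1 ∈ W ∧ p.2 ∈ W ∧ EqCong G p.1 p.2}

/-- `C⟨G⟩` : the set of `Θ⟨G⟩`-classes of elements of `W`, viewed as new constants. -/
def CCl {S : Type} {ar : S → ℕ} (G : Set (GTerm S ar × GTerm S ar))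
    (W : Set (GTerm S ar)) : Set (Set (GTerm S ar)) :=
  {A | ∃ t ∈ W, A = thCls G W t}

/-- Terms over the signature extended with a type `C` of new constants. -/
inductive XTerm (S : Type) (ar : S → ℕ) (C : Type) : Type
  | const (c : C) : XTerm S ar C
  | node (σ : S) (args : Fin (ar σ) → XTerm S ar C) : XTerm S ar C

abbrev XRule (S : Type) (ar : S → ℕ) (C : Type) : Type :=
  XTerm S ar C × XTerm S ar C

/-- Embedding of ground terms over `Σ` into the extended terms. -/
def GTerm.toX {S : Type} {ar : S → ℕ} {C : Type} : GTerm S ar → XTerm S ar C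
  | .node σ f => .node σ (fun i => (f i).toX)

/-- The GTRS `R⟨G⟩` (relative to the subterm set `W`): its rules are exactly
`σ(t₁/Θ⟨G⟩, …, t_m/Θ⟨G⟩) → σ(t₁,…,t_m)/Θ⟨G⟩` for `σ(t₁,…,t_m) ∈ W`. -/
def RRsys {S : Type} {ar : S → ℕ} (G : Set (GTerm S ar × GTerm S ar))
    (W : Set (GTerm S ar)) : Set (XRule S ar (Set (GTerm S ar))) :=
  {r | ∃ (σ : S) (ts : Fin (ar σ) → GTerm S ar),
      GTerm.node σ ts ∈ W ∧
      r = (XTerm.node σ (fun i => XTerm.const (thCls G W (ts i))),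
           XTerm.const (thCls G W (GTerm.node σ ts)))}

/-- One-step rewriting by a GTRS `R`. -/
inductive Rew {S : Type} {ar : S → ℕ} {C : Type} (R : Set (XRule S ar C)) :
    XTerm S ar C → XTerm S ar C → Prop
  | rule {l r : XTerm S ar C} : (l, r) ∈ R → Rew R l r
  | node {σ : S} {f g : Fin (ar σ) → XTerm S ar C} (i : Fin (ar σ)) :
      Rew R (f i) (g i) → (∀ j, j ≠ i → f j = g j) →
      Rew R (XTerm.node σ f) (XTerm.node σ g)

/-- `→*_R` : reflexive–transitive closure of one-step rewriting. -/
def RewStar {S : Type} {ar : S → ℕ} {C : Type} (R : Set (XRule S ar C)) :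
    XTerm S ar C → XTerm S ar C → Prop :=
  Relation.ReflTransGen (Rew R)

/-- A GTRS is total (w.r.t. a set `Cst` of constants) if every `σ(a₁,…,a_m)` with
`a₁,…,a_m ∈ Cst` is the left-hand side of some rule. -/
def TotalR {S : Type} {ar : S → ℕ} (R : Set (XRule S ar (Set (GTerm S ar))))
    (Cst : Set (Set (GTerm S ar))) : Prop :=
  ∀ (σ : S) (av : Fin (ar σ) → Set (GTerm S ar)), (∀ i, av i ∈ Cst) →
    ∃ rhs, (XTerm.node σ (fun i => XTerm.const (av i)), rhs) ∈ R

/-- An extended term containing no new constants, i.e. a ground term over `Σ`. -/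
def IsGroundX {S : Type} {ar : S → ℕ} {C : Type} (t : XTerm S ar C) : Prop :=
  ∃ s : GTerm S ar, GTerm.toX s = t

/-- `ProperExt b t` : `t = δ[b]` for some one-hole context `δ` over `Σ`
different from the hole itself. -/
inductive ProperExt {S : Type} {ar : S → ℕ} {C : Type} (b : XTerm S ar C) :
    XTerm S ar C → Prop
  | base {σ : S} {f : Fin (ar σ) → XTerm S ar C} (i : Fin (ar σ)) :
      f i = b → (∀ j, j ≠ i → IsGroundX (f j)) → ProperExt b (XTerm.node σ f)
  | step {σ : S} {f : Fin (ar σ) → XTerm S ar C} (i : Fin (ar σ)) :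
      ProperExt b (f i) → (∀ j, j ≠ i → IsGroundX (f j)) → ProperExt b (XTerm.node σ f)

/-- `R` reaches the constant `a` from a proper extension of the constant `b`. -/
def ReachesPE {S : Type} {ar : S → ℕ} (R : Set (XRule S ar (Set (GTerm S ar))))
    (a b : Set (GTerm S ar)) : Prop :=
  ∃ t, ProperExt (XTerm.const b) t ∧ RewStar R t (XTerm.const a)

/-- The arc relation `A[E;F]` of the auxiliary directed graph: `(a,b)` is an arc iff some
rule `σ(a₁,…,a_m) → a` of `R` has `b = aᵢ` for some `i`. -/
def AuxArc {S : Type} {ar : S → ℕ} (R : Set (XRule S ar (Set (GTerm S ar))))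
    (a b : Set (GTerm S ar)) : Prop :=
  ∃ (σ : S) (av : Fin (ar σ) → Set (GTerm S ar)) (i : Fin (ar σ)),
    (XTerm.node σ (fun j => XTerm.const (av j)), XTerm.const a) ∈ R ∧ av i = b

/-- `R1` keeps up with `Rall` writing the constant `a`. -/
def KeepsUp {S : Type} {ar : S → ℕ}
    (R1 Rall : Set (XRule S ar (Set (GTerm S ar))))
    (C1 : Set (Set (GTerm S ar))) (a : Set (GTerm S ar)) : Prop :=
  ∀ (σ : S) (av : Fin (ar σ) → Set (GTerm S ar)),
    (XTerm.node σ (fun i => XTerm.const (av i)), XTerm.const a) ∈ Rall →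
    ∀ bv : Fin (ar σ) → Set (GTerm S ar),
      (∀ i, bv i ∈ C1) → (∀ i, bv i ⊆ av i) →
      ∃ rhs, (XTerm.node σ (fun i => XTerm.const (bv i)), rhs) ∈ R1

/-- `R1` (with constant set `C1`) simulates `Rall` (with constant set `Call`) on `a`. -/
def SimulatesOn {S : Type} {ar : S → ℕ}
    (R1 Rall : Set (XRule S ar (Set (GTerm S ar))))
    (C1 Call : Set (Set (GTerm S ar))) (a : Set (GTerm S ar)) : Prop :=
  a ∈ C1 ∧ ∀ b ∈ Call, ReachesPE Rall a b → KeepsUp R1 Rall C1 b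

/-- `R⟨E,F⟩` and `R⟨F,E⟩` together simulate `R⟨E∪F,∅⟩`. -/
def TogetherSim {S : Type} {ar : S → ℕ}
    (E F : Set (GTerm S ar × GTerm S ar)) : Prop :=
  ∀ a ∈ CCl (E ∪ F) (STSet (E ∪ F)),
    SimulatesOn (RRsys E (STSet (E ∪ F))) (RRsys (E ∪ F) (STSet (E ∪ F)))
      (CCl E (STSet (E ∪ F))) (CCl (E ∪ F) (STSet (E ∪ F))) a ∨
    SimulatesOn (RRsys F (STSet (E ∪ F))) (RRsys (E ∪ F) (STSet (E ∪ F)))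
      (CCl F (STSet (E ∪ F))) (CCl (E ∪ F) (STSet (E ∪ F))) a

section MyAux

variable {S : Type} {ar : S → ℕ}

/-- Rules of `RRsys` have the shape `node σ (consts) → const c`. -/
lemma my_rrsys_shape {G : Set (GTerm S ar × GTerm S ar)} {W : Set (GTerm S ar)}
    {l r : XTerm S ar (Set (GTerm S ar))} (h : (l, r) ∈ RRsys G W) :
    ∃ (σ : S) (av : Fin (ar σ) → Set (GTerm S ar)) (cst : Set (GTerm S ar)),
      l = XTerm.node σ (fun i => XTerm.const (av i)) ∧ r = XTerm.const cst := by
  obtain ⟨σ, ts, _, heq⟩ := h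
  rw [Prod.ext_iff] at heq
  exact ⟨σ, fun i => thCls G W (ts i), thCls G W (GTerm.node σ ts), heq.1, heq.2⟩

lemma my_rhs_mem_ccl {G : Set (GTerm S ar × GTerm S ar)} {W : Set (GTerm S ar)}
    {l : XTerm S ar (Set (GTerm S ar))} {a : Set (GTerm S ar)}
    (h : (l, XTerm.const a) ∈ RRsys G W) : a ∈ CCl G W := by
  obtain ⟨σ, ts, hW, heq⟩ := h
  rw [Prod.ext_iff] at heq
  obtain ⟨-, h2⟩ := heq
  injection h2 with h3
  exact ⟨GTerm.node σ ts, hW, h3⟩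

lemma my_const_no_step {G : Set (GTerm S ar × GTerm S ar)} {W : Set (GTerm S ar)}
    {cst : Set (GTerm S ar)} {u : XTerm S ar (Set (GTerm S ar))}
    (h : Rew (RRsys G W) (XTerm.const cst) u) : False := by
  cases h with
  | rule hm =>
    obtain ⟨σ, av, c, h1, -⟩ := my_rrsys_shape hm
    exact nomatch h1

lemma my_rewstar_const {G : Set (GTerm S ar × GTerm S ar)} {W : Set (GTerm S ar)}
    {cst c : Set (GTerm S ar)}
    (h : RewStar (RRsys G W) (XTerm.const cst) (XTerm.const c)) : cst = c := by
  rcases (Relation.ReflTransGen.cases_head h) with heq | ⟨u, hstep, -⟩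
  · cases heq; rfl
  · exact absurd hstep my_const_no_step

lemma my_rewstar_to_const {G : Set (GTerm S ar × GTerm S ar)} {W : Set (GTerm S ar)}
    {t : XTerm S ar (Set (GTerm S ar))} {a : Set (GTerm S ar)}
    (h : RewStar (RRsys G W) t (XTerm.const a)) :
    t = XTerm.const a ∨
    ∃ (σ : S) (f : Fin (ar σ) → XTerm S ar (Set (GTerm S ar)))
      (av : Fin (ar σ) → Set (GTerm S ar)),
      t = XTerm.node σ f ∧ (∀ i, RewStar (RRsys G W) (f i) (XTerm.const (av i))) ∧
      (XTerm.node σ (fun i => XTerm.const (av i)), XTerm.const a) ∈ RRsys G W := by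
  induction h using Relation.ReflTransGen.head_induction_on with
  | refl => exact Or.inl rfl
  | head hstep hrest ih =>
    rename_i t u
    cases hstep with
    | rule hm =>
      obtain ⟨σ, av, c, h1, h2⟩ := my_rrsys_shape hm
      subst h1; subst h2
      rcases ih with heq | ⟨σ', f', av', heq, -, -⟩
      · injection heq with h3
        subst h3
        exact Or.inr ⟨σ, fun i => XTerm.const (av i), av, rfl,
          fun i => Relation.ReflTransGen.refl, hm⟩
      · exact absurd heq (fun h => nomatch h)
    | node i hi hrest' =>
      rename_i σ f g
      rcases ih with heq | ⟨σ', g', av, heq, hargs, hrule⟩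
      · exact absurd heq (fun h => nomatch h)
      · injection heq with h1 h2
        subst h1
        have h2' : g = g' := eq_of_heq h2
        subst h2'
        refine Or.inr ⟨σ, f, av, rfl, fun j => ?_, hrule⟩
        by_cases hji : j = i
        · subst hji
          exact (hargs j).head hi
        · rw [hrest' j hji]
          exact hargs j

/-- Chains of arcs, indexed by `ℕ`. -/
def MyChain (R : Set (XRule S ar (Set (GTerm S ar)))) (c : ℕ → Set (GTerm S ar)) (k : ℕ) :
    Prop :=
  ∀ j < k, AuxArc R (c (j + 1)) (c j)

lemma my_chain_of_pe {G : Set (GTerm S ar × GTerm S ar)} {W : Set (GTerm S ar)}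
    {b : Set (GTerm S ar)} {t : XTerm S ar (Set (GTerm S ar))}
    (hpe : ProperExt (XTerm.const b) t) :
    ∀ a : Set (GTerm S ar), RewStar (RRsys G W) t (XTerm.const a) →
      ∃ k, 1 ≤ k ∧ ∃ c : ℕ → Set (GTerm S ar),
        c 0 = b ∧ c k = a ∧ MyChain (RRsys G W) c k := by
  induction hpe with
  | base i hfi hg =>
    rename_i σ f
    intro a hstar
    rcases my_rewstar_to_const hstar with heq | ⟨σ', f', av, heq, hargs, hrule⟩
    · exact absurd heq (fun h => nomatch h)
    · injection heq with h1 h2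
      subst h1
      have h2' : f = f' := eq_of_heq h2
      subst h2'
      have havi : av i = b := by
        have := hargs i
        rw [hfi] at this
        exact (my_rewstar_const this).symm
      refine ⟨1, le_refl 1, fun n => if n = 0 then b else a, by simp, by simp, ?_⟩
      intro j hj
      interval_cases j
      simp only [if_pos rfl, if_neg (by norm_num : (1 : ℕ) ≠ 0)]
      exact ⟨σ, av, i, hrule, havi⟩
  | step i hpe' hg ih =>
    rename_i σ f
    intro a hstar
    rcases my_rewstar_to_const hstar with heq | ⟨σ', f', av, heq, hargs, hrule⟩
    · exact absurd heq (fun h => nomatch h)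
    · injection heq with h1 h2
      subst h1
      have h2' : f = f' := eq_of_heq h2
      subst h2'
      obtain ⟨k, hk1, c, hc0, hck, hch⟩ := ih (av i) (hargs i)
      refine ⟨k + 1, by omega, fun n => if n = k + 1 then a else c n, ?_, by simp, ?_⟩
      · simp only [if_neg (by omega : ¬ 0 = k + 1)]; exact hc0
      · intro j hj
        rcases Nat.lt_or_ge j k with hjk | hjk
        · simp only [if_neg (by omega : ¬ j + 1 = k + 1), if_neg (by omega : ¬ j = k + 1)]
          exact hch j hjk
        · have hj' : j = k := by omega
          subst hj'
          simp only [if_pos rfl, if_neg (by omega : ¬ j = j + 1)]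
          rw [hck]
          exact ⟨σ, av, i, hrule, rfl⟩

lemma my_simple_chain {R : Set (XRule S ar (Set (GTerm S ar)))} {b a : Set (GTerm S ar)} :
    ∀ k : ℕ, 1 ≤ k → ∀ c : ℕ → Set (GTerm S ar), c 0 = b → c k = a → MyChain R c k →
    ∃ k', 1 ≤ k' ∧ ∃ c' : ℕ → Set (GTerm S ar), c' 0 = b ∧ c' k' = a ∧
      MyChain R c' k' ∧ ∀ i j, i < j → j ≤ k' - 1 → c' i ≠ c' j := by
  intro k
  induction k using Nat.strong_induction_on with
  | _ k ih =>
    intro hk c h0 hka hch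
    by_cases hs : ∀ i j, i < j → j ≤ k - 1 → c i ≠ c j
    · exact ⟨k, hk, c, h0, hka, hch, hs⟩
    · push_neg at hs
      obtain ⟨i, j, hij, hjk, hcij⟩ := hs
      have hjlt : j < k := by omega
      set d := j - i with hd
      have hd1 : 1 ≤ d := by omega
      have hdk : d ≤ k := by omega
      set c2 : ℕ → Set (GTerm S ar) := fun n => if n ≤ i then c n else c (n + d) with hc2
      have h20 : c2 0 = b := by simp only [hc2, if_pos (Nat.zero_le i)]; exact h0
      have h2k : c2 (k - d) = a := by
        simp only [hc2, if_neg (by omega : ¬ k - d ≤ i)]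
        rw [(by omega : k - d + d = k)]
        exact hka
      have h2ch : MyChain R c2 (k - d) := by
        intro m hm
        rcases Nat.lt_or_ge m i with hmi | hmi
        · simp only [hc2, if_pos (by omega : m ≤ i), if_pos (by omega : m + 1 ≤ i)]
          exact hch m (by omega)
        rcases Nat.eq_or_lt_of_le hmi with hmi' | hmi'
        · simp only [hc2, if_pos (by omega : m ≤ i), if_neg (by omega : ¬ m + 1 ≤ i)]
          subst hmi'
          rw [(by omega : i + 1 + d = j + 1), hcij]
          exact hch j hjlt
        · simp only [hc2, if_neg (by omega : ¬ m ≤ i), if_neg (by omega : ¬ m + 1 ≤ i)]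
          rw [(by omega : m + 1 + d = m + d + 1)]
          exact hch (m + d) (by omega)
      exact ih (k - d) (by omega) (by omega) c2 h20 h2k h2ch

lemma my_subterm_finite (t : GTerm S ar) : {s : GTerm S ar | Subterm s t}.Finite := by
  induction t with
  | node σ f ih =>
    have hsub : {s : GTerm S ar | Subterm s (GTerm.node σ f)} ⊆
        insert (GTerm.node σ f) (⋃ i, {s | Subterm s (f i)}) := by
      intro s hs
      cases hs with
      | refl => exact Set.mem_insert _ _
      | node i h => exact Set.mem_insert_iff.2 (Or.inr (Set.mem_iUnion.2 ⟨i, h⟩))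
    exact Set.Finite.subset (Set.Finite.insert _ (Set.finite_iUnion ih)) hsub

lemma my_stset_finite {G : Set (GTerm S ar × GTerm S ar)} (hG : G.Finite) :
    (STSet G).Finite := by
  have hsub : STSet G ⊆ ⋃ p ∈ G, ({s | Subterm s p.1} ∪ {s | Subterm s p.2}) := by
    rintro s ⟨p, hp, h⟩
    exact Set.mem_biUnion hp h
  exact Set.Finite.subset
    (hG.biUnion fun p _ => ((my_subterm_finite p.1).union (my_subterm_finite p.2))) hsub

lemma my_ccl_finite {G : Set (GTerm S ar × GTerm S ar)} {W : Set (GTerm S ar)}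
    (hW : W.Finite) : (CCl G W).Finite := by
  have hsub : CCl G W ⊆ (thCls G W) '' W := by
    rintro A ⟨t, ht, rfl⟩
    exact ⟨t, ht, rfl⟩
  exact (hW.image _).subset hsub

lemma my_chain_card {CC : Set (Set (GTerm S ar))} (hfin : CC.Finite) {k : ℕ}
    (c : ℕ → Set (GTerm S ar)) (hmem : ∀ j ≤ k - 1, c j ∈ CC)
    (hinj : ∀ i j, i < j → j ≤ k - 1 → c i ≠ c j) (hk : 1 ≤ k) :
    k ≤ CC.ncard := by
  have : Finite ↥CC := hfin
  let f : Fin k → ↥CC := fun j => ⟨c j, hmem j (by omega)⟩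
  have hfinj : Function.Injective f := by
    intro x y hxy
    have hcc : c x = c y := congrArg Subtype.val hxy
    by_contra hne
    have hne' : (x : ℕ) ≠ (y : ℕ) := fun h => hne (Fin.ext h)
    rcases Nat.lt_or_ge (x : ℕ) (y : ℕ) with h | h
    · exact hinj x y h (by omega) hcc
    · exact hinj y x (by omega) (by omega) hcc.symm
  have hcard := Nat.card_le_card_of_injective f hfinj
  simpa [Nat.card_coe_set_eq] using hcard

end MyAux

theorem stmt_14 {S : Type} [Fintype S] {ar : S → ℕ} (hconst : ∃ c : S, ar c = 0)
    (E F : Set (GTerm S ar × GTerm S ar)) (hEfin : E.Finite) (hFfin : F.Finite)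
    (a b : Set (GTerm S ar))
    (ha : a ∈ CCl (E ∪ F) (STSet (E ∪ F))) (hb : b ∈ CCl (E ∪ F) (STSet (E ∪ F)))
    (hreach : ReachesPE (RRsys (E ∪ F) (STSet (E ∪ F))) a b) :
    ∃ (k : ℕ) (hk : 1 ≤ k), k ≤ (CCl (E ∪ F) (STSet (E ∪ F))).ncard ∧
      ∃ (σ : Fin k → S)
        (args : (j : Fin k) → Fin (ar (σ j)) → Set (GTerm S ar))
        (rhs : Fin k → Set (GTerm S ar))
        (idx : (j : Fin k) → Fin (ar (σ j))),
        (∀ j, 1 ≤ ar (σ j)) ∧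
        (∀ j, (XTerm.node (σ j) (fun i => XTerm.const (args j i)),
               XTerm.const (rhs j)) ∈ RRsys (E ∪ F) (STSet (E ∪ F))) ∧
        args ⟨0, by omega⟩ (idx ⟨0, by omega⟩) = b ∧
        (∀ (j : ℕ) (hj : j + 1 < k),
          rhs ⟨j, by omega⟩ = args ⟨j + 1, hj⟩ (idx ⟨j + 1, hj⟩)) ∧
        (∀ j : Fin k, (j : ℕ) < k - 1 → rhs j ≠ b) ∧
        (∀ i j : Fin k, (i : ℕ) < (j : ℕ) → (j : ℕ) < k - 1 → rhs i ≠ rhs j) ∧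
        rhs ⟨k - 1, by omega⟩ = a := by
  classical
  set G := E ∪ F with hG
  set W := STSet (E ∪ F) with hW
  set R := RRsys G W with hR
  obtain ⟨t, hpe, hstar⟩ := hreach
  obtain ⟨k0, hk01, c0, hc00, hc0k, hch0⟩ := my_chain_of_pe hpe a hstar
  obtain ⟨k, hk1, c, h0, hka, hch, hinj⟩ :=
    my_simple_chain k0 hk01 c0 hc00 hc0k hch0
  have hCfin : (CCl G W).Finite := my_ccl_finite (my_stset_finite (hEfin.union hFfin))
  have hmem : ∀ j ≤ k - 1, c j ∈ CCl G W := by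
    intro j hj
    rcases Nat.eq_zero_or_pos j with hj0 | hj0
    · subst hj0; rw [h0]; exact hb
    · obtain ⟨m, rfl⟩ := Nat.exists_eq_add_of_lt hj0
      simp only [Nat.zero_add] at *
      obtain ⟨σ', av, i, hrule, -⟩ := hch m (by omega)
      exact my_rhs_mem_ccl hrule
  have hcard : k ≤ (CCl G W).ncard := my_chain_card hCfin c hmem hinj hk1
  have harc : ∀ j : Fin k, ∃ (σ' : S) (av : Fin (ar σ') → Set (GTerm S ar))
      (i : Fin (ar σ')),
      (XTerm.node σ' (fun m => XTerm.const (av m)), XTerm.const (c ((j : ℕ) + 1))) ∈ R ∧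
        av i = c (j : ℕ) :=
    fun j => hch j j.isLt
  choose σf avf idxf hrulef havf using harc
  refine ⟨k, hk1, hcard, σf, avf, fun j => c ((j : ℕ) + 1), idxf, ?_, ?_, ?_, ?_, ?_, ?_, ?_⟩
  · exact fun j => (idxf j).pos
  · exact fun j => hrulef j
  · rw [havf ⟨0, by omega⟩]; exact h0
  · intro j hj
    exact (havf ⟨j + 1, hj⟩).symm
  · intro j hj
    rw [← h0]
    exact (hinj 0 ((j : ℕ) + 1) (by omega) (by omega)).symm
  · intro i j hij hjk
    exact hinj ((i : ℕ) + 1) ((j : ℕ) + 1) (by omega) (by omega)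
  · show c (k - 1 + 1) = a
    rw [Nat.sub_add_cancel hk1]
    exact hka
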